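/- Let G₁, G₂, G₃ be simple graphs on a common set V of n vertices such that no pair of distinct vertices is adjacent in all three graphs. Call a 2-element set X ⊆ V a digon if e₁(X) + e₂(X) + e₃(X) = 2. Let M be a maximum-size collection of pairwise disjoint digons and let D be the set of vertices not covered by M. Then for every digon X ∈ M there is at most one vertex y ∈ D with e₁(X, {y}) + e₂(X, {y}) + e₃(X, {y}) = 4. -/

import Mathlib

open scoped Classical


/-- Number of edges of `G` with both endpoints in `X`. -/
noncomputable def edgesWithin {V : Type*} (G : SimpleGraph V) (X : Set V) : ℕ :=
  {e ∈ G.edgeSet | ∀ v ∈ e, v ∈ X}.ncard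

/-- Number of edges of `G` with one endpoint in `X` and the other in `Y`. -/
noncomputable def edgesBetween {V : Type*} (G : SimpleGraph V) (X Y : Set V) : ℕ :=
  {e ∈ G.edgeSet | ∃ x ∈ X, ∃ y ∈ Y, e = s(x, y)}.ncard

/-- A digon: a 2-element vertex set inducing exactly two edges among `G₁, G₂, G₃`. -/
noncomputable def IsDigon {V : Type*} (G₁ G₂ G₃ : SimpleGraph V) (X : Set V) : Prop :=
  X.ncard = 2 ∧ edgesWithin G₁ X + edgesWithin G₂ X + edgesWithin G₃ X = 2

lemma sym2_ne {V : Type*} {a b y : V} (hab : a ≠ b) : s(a, y) ≠ s(b, y) := by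
  intro h
  rcases Sym2.eq_iff.mp h with ⟨h1, _⟩ | ⟨h1, h2⟩
  · exact hab h1
  · exact hab (h1.trans h2)

lemma ew_pair {V : Type*} (G : SimpleGraph V) (a b : V) (hab : a ≠ b) :
    edgesWithin G {a, b} = (if G.Adj a b then 1 else 0) := by
  have hset : {e ∈ G.edgeSet | ∀ v ∈ e, v ∈ ({a, b} : Set V)}
      = (if G.Adj a b then {s(a, b)} else (∅ : Set (Sym2 V))) := by
    ext e
    induction e with
    | _ u v =>
      simp only [Set.mem_setOf_eq, SimpleGraph.mem_edgeSet, Sym2.mem_iff,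
        Set.mem_insert_iff, Set.mem_singleton_iff]
      constructor
      · rintro ⟨hadj, hmem⟩
        have hu := hmem u (Or.inl rfl)
        have hv := hmem v (Or.inr rfl)
        have hne : u ≠ v := hadj.ne
        have hAB : G.Adj a b := by
          rcases hu with rfl | rfl <;> rcases hv with rfl | rfl
          · exact absurd rfl hne
          · exact hadj
          · exact hadj.symm
          · exact absurd rfl hne
        rw [if_pos hAB]
        rcases hu with rfl | rfl <;> rcases hv with rfl | rfl
        · exact absurd rfl hne
        · rfl
        · exact Sym2.eq_swap
        · exact absurd rfl hne
      · intro h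
        by_cases hAB : G.Adj a b
        · rw [if_pos hAB, Set.mem_singleton_iff] at h
          rcases Sym2.eq_iff.mp h with ⟨rfl, rfl⟩ | ⟨rfl, rfl⟩
          · exact ⟨hAB, by rintro w (rfl | rfl) <;> simp⟩
          · exact ⟨hAB.symm, by rintro w (rfl | rfl) <;> simp⟩
        · rw [if_neg hAB] at h; exact absurd h (Set.notMem_empty _)
  rw [edgesWithin, hset]
  by_cases hAB : G.Adj a b <;> simp [hAB]

lemma eb_pair {V : Type*} (G : SimpleGraph V) (a b y : V) (hab : a ≠ b) :
    edgesBetween G {a, b} {y}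
      = (if G.Adj a y then 1 else 0) + (if G.Adj b y then 1 else 0) := by
  have hset : {e ∈ G.edgeSet | ∃ x ∈ ({a, b} : Set V), ∃ z ∈ ({y} : Set V), e = s(x, z)}
      = (if G.Adj a y then {s(a, y)} else (∅ : Set (Sym2 V)))
        ∪ (if G.Adj b y then {s(b, y)} else ∅) := by
    ext e
    simp only [Set.mem_setOf_eq, Set.mem_insert_iff, Set.mem_singleton_iff, Set.mem_union]
    constructor
    · rintro ⟨he, x, (rfl | rfl), z, rfl, rfl⟩
      · left; rw [SimpleGraph.mem_edgeSet] at he; simp [he]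
      · right; rw [SimpleGraph.mem_edgeSet] at he; simp [he]
    · intro h
      rcases h with h | h
      · by_cases hA : G.Adj a y
        · rw [if_pos hA, Set.mem_singleton_iff] at h
          subst h
          exact ⟨hA, a, Or.inl rfl, y, rfl, rfl⟩
        · rw [if_neg hA] at h; exact absurd h (Set.notMem_empty _)
      · by_cases hB : G.Adj b y
        · rw [if_pos hB, Set.mem_singleton_iff] at h
          subst h
          exact ⟨hB, b, Or.inr rfl, y, rfl, rfl⟩
        · rw [if_neg hB] at h; exact absurd h (Set.notMem_empty _)
  rw [edgesBetween, hset]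
  have hne := sym2_ne (y := y) hab
  by_cases hA : G.Adj a y <;> by_cases hB : G.Adj b y <;>
    simp [hA, hB, Set.ncard_pair hne, Set.ncard_pair hne.symm]

theorem at_most_one_fully_joined_uncovered_vertex {V : Type*} [Fintype V]
    (G₁ G₂ G₃ : SimpleGraph V)
    (hno3 : ∀ x y : V, ¬ (G₁.Adj x y ∧ G₂.Adj x y ∧ G₃.Adj x y))
    (M : Set (Set V)) (hdig : ∀ X ∈ M, IsDigon G₁ G₂ G₃ X)
    (hdisj : ∀ X ∈ M, ∀ Y ∈ M, X ≠ Y → Disjoint X Y)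
    (hmax : ∀ M' : Set (Set V), (∀ X ∈ M', IsDigon G₁ G₂ G₃ X) →
      (∀ X ∈ M', ∀ Y ∈ M', X ≠ Y → Disjoint X Y) → M'.ncard ≤ M.ncard)
    (D : Set V) (hD : D = {v : V | ∀ X ∈ M, v ∉ X})
    (X : Set V) (hXM : X ∈ M) (y y' : V) (hy : y ∈ D) (hy' : y' ∈ D)
    (h4 : edgesBetween G₁ X {y} + edgesBetween G₂ X {y} + edgesBetween G₃ X {y} = 4)
    (h4' : edgesBetween G₁ X {y'} + edgesBetween G₂ X {y'} + edgesBetween G₃ X {y'} = 4) :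
    y = y' := by
  subst hD
  by_contra hyy'
  obtain ⟨hX2, _⟩ := hdig X hXM
  obtain ⟨a, b, hab, rfl⟩ := Set.ncard_eq_two.mp hX2
  -- y and y' are not in {a, b}
  have hyX : y ∉ ({a, b} : Set V) := hy _ hXM
  have hy'X : y' ∉ ({a, b} : Set V) := hy' _ hXM
  have hay : a ≠ y := fun h => hyX (by simp [← h])
  have hby : b ≠ y := fun h => hyX (by simp [← h])
  have hay' : a ≠ y' := fun h => hy'X (by simp [← h])
  have hby' : b ≠ y' := fun h => hy'X (by simp [← h])
  -- counting function
  set f : V → V → ℕ := fun u z =>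
    (if G₁.Adj u z then 1 else 0) + (if G₂.Adj u z then 1 else 0)
      + (if G₃.Adj u z then 1 else 0) with hf
  have hle2 : ∀ u z : V, f u z ≤ 2 := by
    intro u z
    have := hno3 u z
    by_cases h1 : G₁.Adj u z <;> by_cases h2 : G₂.Adj u z <;> by_cases h3 : G₃.Adj u z <;>
      simp [hf, h1, h2, h3] at this ⊢
  have hsum : ∀ z : V,
      edgesBetween G₁ {a, b} {z} + edgesBetween G₂ {a, b} {z}
        + edgesBetween G₃ {a, b} {z} = f a z + f b z := by
    intro z
    rw [eb_pair G₁ a b z hab, eb_pair G₂ a b z hab, eb_pair G₃ a b z hab, hf]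
    ring
  have hfy : f a y = 2 ∧ f b y = 2 := by
    have := (hsum y).symm.trans h4
    have h1 := hle2 a y; have h2 := hle2 b y; omega
  have hfy' : f a y' = 2 ∧ f b y' = 2 := by
    have := (hsum y').symm.trans h4'
    have h1 := hle2 a y'; have h2 := hle2 b y'; omega
  -- {a, y} and {b, y'} are digons
  have hdig1 : IsDigon G₁ G₂ G₃ {a, y} := by
    refine ⟨Set.ncard_pair hay, ?_⟩
    rw [ew_pair G₁ a y hay, ew_pair G₂ a y hay, ew_pair G₃ a y hay]
    have := hfy.1; simp only [hf] at this; omega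
  have hdig2 : IsDigon G₁ G₂ G₃ {b, y'} := by
    refine ⟨Set.ncard_pair hby', ?_⟩
    rw [ew_pair G₁ b y' hby', ew_pair G₂ b y' hby', ew_pair G₃ b y' hby']
    have := hfy'.2; simp only [hf] at this; omega
  -- build the larger family
  set M' : Set (Set V) := insert {a, y} (insert {b, y'} (M \ {{a, b}})) with hM'
  have hMfin : M.Finite := Set.toFinite M
  have hnm1 : ({a, y} : Set V) ∉ M := fun h => (hy _ h) (by simp)
  have hnm2 : ({b, y'} : Set V) ∉ M := fun h => (hy' _ h) (by simp)
  have hne12 : ({a, y} : Set V) ≠ {b, y'} := by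
    intro h
    have : a ∈ ({b, y'} : Set V) := h ▸ (by simp : a ∈ ({a, y} : Set V))
    rcases this with h' | h'
    · exact hab h'
    · exact hay' h'
  -- all members of M' are digons
  have hdig' : ∀ Z ∈ M', IsDigon G₁ G₂ G₃ Z := by
    rintro Z (rfl | rfl | ⟨hZ, _⟩)
    · exact hdig1
    · exact hdig2
    · exact hdig Z hZ
  -- pairwise disjoint
  have hdisj1M : ∀ Z ∈ M, Z ≠ ({a, b} : Set V) → Disjoint ({a, y} : Set V) Z := by
    intro Z hZ hZab
    rw [Set.disjoint_left]
    rintro v (rfl | rfl)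
    · intro hvZ
      exact (Set.disjoint_left.mp (hdisj _ hXM _ hZ (Ne.symm hZab)) (by simp)) hvZ
    · exact hy _ hZ
  have hdisj2M : ∀ Z ∈ M, Z ≠ ({a, b} : Set V) → Disjoint ({b, y'} : Set V) Z := by
    intro Z hZ hZab
    rw [Set.disjoint_left]
    rintro v (rfl | rfl)
    · intro hvZ
      exact (Set.disjoint_left.mp (hdisj _ hXM _ hZ (Ne.symm hZab)) (by simp)) hvZ
    · exact hy' _ hZ
  have hdisj12 : Disjoint ({a, y} : Set V) ({b, y'} : Set V) := by
    rw [Set.disjoint_left]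
    rintro v (rfl | rfl) <;> rintro (h | h)
    · exact hab h
    · exact hay' h
    · exact hby h.symm
    · exact hyy' h
  have hdisj' : ∀ Z ∈ M', ∀ W ∈ M', Z ≠ W → Disjoint Z W := by
    rintro Z (rfl | rfl | ⟨hZ, hZne⟩) W (rfl | rfl | ⟨hW, hWne⟩) hne
    · exact absurd rfl hne
    · exact hdisj12
    · exact hdisj1M _ hW hWne
    · exact hdisj12.symm
    · exact absurd rfl hne
    · exact hdisj2M _ hW hWne
    · exact (hdisj1M _ hZ hZne).symm
    · exact (hdisj2M _ hZ hZne).symm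
    · exact hdisj _ hZ _ hW hne
  -- cardinality contradiction
  have hcard : M'.ncard = M.ncard + 1 := by
    have hfin2 : (M \ {{a, b}}).Finite := hMfin.diff
    have h1 : ({b, y'} : Set V) ∉ M \ {{a, b}} := fun h => hnm2 h.1
    have h2 : ({a, y} : Set V) ∉ insert ({b, y'} : Set V) (M \ {{a, b}}) := by
      rintro (h | h)
      · exact hne12 h
      · exact hnm1 h.1
    rw [hM', Set.ncard_insert_of_notMem h2 (hfin2.insert _),
      Set.ncard_insert_of_notMem h1 hfin2,
      Set.ncard_diff_singleton_of_mem hXM]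
    have : 0 < M.ncard := (Set.ncard_pos hMfin).mpr ⟨_, hXM⟩
    omega
  have := hmax M' hdig' hdisj'
  omega
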